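/- arXiv:1510.00864 — 5 statements merged into one kernel-verified Lean document; each statement's English description precedes it below -/
import Mathlib

section
/- Let N ≥ 2, let A ∈ ℝ^{N,N}, and let 1 < p < ∞. Then there exists a constant γ_A > 0 such that |z|²·⟨w,Aw⟩ + (p−2)·⟨w,z⟩·⟨z,Aw⟩ ≥ γ_A·|z|²·|w|² for all z, w ∈ ℝ^N if and only if A is invertible and μ₁(A) > |p−2|/p. -/
/-- The action of a real `N × N` matrix on `EuclideanSpace ℝ (Fin N)`. -/
noncomputable def mulE {N : ℕ} (A : Matrix (Fin N) (Fin N) ℝ)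
    (w : EuclideanSpace ℝ (Fin N)) : EuclideanSpace ℝ (Fin N) :=
  Matrix.toEuclideanLin A w

/-- The first antieigenvalue `μ₁(A)` of a real matrix `A`:
`μ₁(A) = inf { ⟨w, Aw⟩ / (|w|·|Aw|) : w ≠ 0, Aw ≠ 0 }`. -/
noncomputable def mu1 {N : ℕ} (A : Matrix (Fin N) (Fin N) ℝ) : ℝ :=
  sInf { x : ℝ | ∃ w : EuclideanSpace ℝ (Fin N), w ≠ 0 ∧ mulE A w ≠ 0 ∧
    x = (inner ℝ w (mulE A w) : ℝ) / (‖w‖ * ‖mulE A w‖) }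

open scoped RealInnerProductSpace


section Aux
variable {N : ℕ}

local notation "E" => EuclideanSpace ℝ (Fin N)

lemma aux_upper (z w u : E) :
    2 * ((inner ℝ z w : ℝ) * (inner ℝ z u : ℝ)) ≤ ((inner ℝ w u : ℝ) + ‖w‖ * ‖u‖) * ‖z‖ ^ 2 := by
  rcases eq_or_ne w 0 with rfl | hw
  · simp
  rcases eq_or_ne u 0 with rfl | hu
  · simp
  have hw' : 0 < ‖w‖ := norm_pos_iff.mpr hw
  have hu' : 0 < ‖u‖ := norm_pos_iff.mpr hu
  set a := ‖u‖ • w + ‖w‖ • u with ha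
  have h1 : (inner ℝ z a : ℝ) * (inner ℝ z a : ℝ) ≤ ‖z‖ ^ 2 * ‖a‖ ^ 2 := by
    have := real_inner_mul_inner_self_le z a
    rwa [real_inner_self_eq_norm_sq, real_inner_self_eq_norm_sq] at this
  have h2 : (inner ℝ z a : ℝ) = ‖u‖ * (inner ℝ z w : ℝ) + ‖w‖ * (inner ℝ z u : ℝ) := by
    rw [ha, inner_add_right, real_inner_smul_right, real_inner_smul_right]
  have h3 : ‖a‖ ^ 2 = 2 * ‖w‖ * ‖u‖ * (‖w‖ * ‖u‖ + (inner ℝ w u : ℝ)) := by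
    rw [ha, norm_add_sq_real, real_inner_smul_left, real_inner_smul_right,
      norm_smul, norm_smul, Real.norm_eq_abs, Real.norm_eq_abs,
      abs_of_pos hw', abs_of_pos hu']
    ring
  rw [h2, h3] at h1
  nlinarith [h1, mul_pos hw' hu',
    sq_nonneg ((inner ℝ z w : ℝ) * ‖u‖ - (inner ℝ z u : ℝ) * ‖w‖)]

lemma aux_lower (z w u : E) :
    ((inner ℝ w u : ℝ) - ‖w‖ * ‖u‖) * ‖z‖ ^ 2 ≤ 2 * ((inner ℝ z w : ℝ) * (inner ℝ z u : ℝ)) := by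
  have := aux_upper z w (-u)
  simp only [inner_neg_right, norm_neg] at this
  linarith

lemma exists_perp (hN : 2 ≤ N) (w : E) : ∃ z : E, z ≠ 0 ∧ (inner ℝ z w : ℝ) = 0 := by
  have hfr : Module.finrank ℝ E = N := finrank_euclideanSpace_fin
  have horth : Module.finrank ℝ (ℝ ∙ w) + Module.finrank ℝ (ℝ ∙ w)ᗮ = N := by
    rw [Submodule.finrank_add_finrank_orthogonal, hfr]
  have hle : Module.finrank ℝ (ℝ ∙ w) ≤ 1 := by
    rcases eq_or_ne w 0 with rfl | hw
    · rw [Submodule.span_zero_singleton, finrank_bot]; omega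
    · rw [finrank_span_singleton hw]
  have hne : (ℝ ∙ w)ᗮ ≠ ⊥ := by
    intro h
    rw [h, finrank_bot] at horth
    omega
  obtain ⟨z, hzmem, hz⟩ := Submodule.exists_mem_ne_zero_of_ne_bot hne
  exact ⟨z, hz, Submodule.mem_orthogonal_singleton_iff_inner_left.mp hzmem⟩

lemma exists_achiever (hN : 2 ≤ N) (w u : E) (ε : ℝ) (hε : ε = 1 ∨ ε = -1) :
    ∃ z : E, z ≠ 0 ∧ 2 * ((inner ℝ z w : ℝ) * (inner ℝ z u : ℝ))
      = ((inner ℝ w u : ℝ) + ε * (‖w‖ * ‖u‖)) * ‖z‖ ^ 2 := by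
  rcases eq_or_ne w 0 with rfl | hw
  · obtain ⟨z, hz, _⟩ := exists_perp hN 0
    exact ⟨z, hz, by simp⟩
  rcases eq_or_ne u 0 with rfl | hu
  · obtain ⟨z, hz, _⟩ := exists_perp hN 0
    exact ⟨z, hz, by simp⟩
  have hw' : 0 < ‖w‖ := norm_pos_iff.mpr hw
  have hu' : 0 < ‖u‖ := norm_pos_iff.mpr hu
  set a := ‖u‖ • w + (ε * ‖w‖) • u with ha
  rcases eq_or_ne a 0 with ha0 | ha0
  · obtain ⟨z, hz, hzw⟩ := exists_perp hN w
    refine ⟨z, hz, ?_⟩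
    have hau : (inner ℝ a u : ℝ) = 0 := by rw [ha0]; simp
    rw [ha, inner_add_left, real_inner_smul_left, real_inner_smul_left,
      real_inner_self_eq_norm_sq] at hau
    have hs : (inner ℝ w u : ℝ) = -(ε * (‖w‖ * ‖u‖)) := by
      have h2 : ‖u‖ * (inner ℝ w u : ℝ) = ‖u‖ * (-(ε * (‖w‖ * ‖u‖))) := by nlinarith [hau]
      exact mul_left_cancel₀ hu'.ne' h2
    rw [hzw, hs]
    ring
  · refine ⟨a, ha0, ?_⟩
    have hiw : (inner ℝ a w : ℝ) = ‖u‖ * ‖w‖ ^ 2 + (ε * ‖w‖) * (inner ℝ w u : ℝ) := by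
      rw [ha, inner_add_left, real_inner_smul_left, real_inner_smul_left,
        real_inner_self_eq_norm_sq, real_inner_comm u w]
    have hiu : (inner ℝ a u : ℝ) = ‖u‖ * (inner ℝ w u : ℝ) + (ε * ‖w‖) * ‖u‖ ^ 2 := by
      rw [ha, inner_add_left, real_inner_smul_left, real_inner_smul_left,
        real_inner_self_eq_norm_sq]
    have hn : ‖a‖ ^ 2 = (‖u‖ * ‖w‖) ^ 2 + 2 * (‖u‖ * (ε * ‖w‖)) * (inner ℝ w u : ℝ)
        + (ε * ‖w‖) ^ 2 * ‖u‖ ^ 2 := by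
      rw [ha, norm_add_sq_real, real_inner_smul_left, real_inner_smul_right,
        norm_smul, norm_smul, Real.norm_eq_abs, Real.norm_eq_abs, abs_of_pos hu']
      simp only [mul_pow, sq_abs]
      ring
    rw [hiw, hiu, hn]
    rcases hε with rfl | rfl <;> ring

lemma pointwise_lower (p : ℝ) (z w u : E) :
    ‖z‖ ^ 2 * (inner ℝ w u : ℝ) + (p - 2) * ((inner ℝ w z : ℝ) * (inner ℝ z u : ℝ))
      ≥ ‖z‖ ^ 2 * (p * (inner ℝ w u : ℝ) - |p - 2| * (‖w‖ * ‖u‖)) / 2 := by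
  rw [show (inner ℝ w z : ℝ) = (inner ℝ z w : ℝ) from real_inner_comm z w]
  rcases le_or_gt 2 p with h | h
  · rw [abs_of_nonneg (by linarith : (0:ℝ) ≤ p - 2)]
    nlinarith [aux_lower z w u, show (0:ℝ) ≤ p - 2 by linarith]
  · rw [abs_of_neg (by linarith : p - 2 < (0:ℝ))]
    nlinarith [aux_upper z w u, show p - 2 < (0:ℝ) by linarith]

end Aux


lemma mulE_injective_iff {N : ℕ} (A : Matrix (Fin N) (Fin N) ℝ) :
    Function.Injective (mulE A) ↔ IsUnit A := by
  rw [← Matrix.mulVec_injective_iff_isUnit]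
  constructor
  · intro h x y hxy
    have h2 : mulE A ((WithLp.equiv 2 _).symm x) = mulE A ((WithLp.equiv 2 _).symm y) := by
      unfold mulE
      simp [Matrix.toEuclideanLin_apply, hxy]
    have h3 := h h2
    exact (WithLp.equiv 2 _).symm.injective h3
  · intro h x y hxy
    have h2 : A.mulVec (WithLp.equiv 2 _ x) = A.mulVec (WithLp.equiv 2 _ y) := by
      have h3 := congrArg (WithLp.equiv 2 _) hxy
      unfold mulE at h3
      simpa [Matrix.toEuclideanLin_apply] using h3
    have h4 := h h2
    exact (WithLp.equiv 2 _).injective h4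


set_option maxHeartbeats 1000000 in
set_option synthInstance.maxHeartbeats 400000 in
/-- The `L^p`-dissipativity condition is equivalent to the `L^p`-antieigenvalue condition
for real matrices of size `N ≥ 2`. -/
theorem stmt_1 {N : ℕ} (hN : 2 ≤ N) (A : Matrix (Fin N) (Fin N) ℝ) (p : ℝ)
    (hp : 1 < p) :
    (∃ γ_A : ℝ, 0 < γ_A ∧ ∀ z w : EuclideanSpace ℝ (Fin N),
      ‖z‖ ^ 2 * (inner ℝ w (mulE A w) : ℝ)
        + (p - 2) * ((inner ℝ w z : ℝ) * (inner ℝ z (mulE A w) : ℝ))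
        ≥ γ_A * (‖z‖ ^ 2 * ‖w‖ ^ 2))
    ↔ (IsUnit A ∧ mu1 A > |p - 2| / p) := by
  have hp0 : (0:ℝ) < p := by linarith
  constructor
  · rintro ⟨γ, hγ, H⟩
    set ε : ℝ := if 2 ≤ p then -1 else 1 with hεdef
    have hε : ε = 1 ∨ ε = -1 := by rw [hεdef]; split_ifs <;> simp
    have heps : (p - 2) * ε = -|p - 2| := by
      rw [hεdef]; split_ifs with h
      · rw [abs_of_nonneg (by linarith : (0:ℝ) ≤ p - 2)]; ring
      · rw [abs_of_neg (by linarith : p - 2 < (0:ℝ))]; ring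
    have key : ∀ w : EuclideanSpace ℝ (Fin N),
        |p-2| * (‖w‖ * ‖mulE A w‖) + 2*γ*‖w‖^2 ≤ p * (inner ℝ w (mulE A w) : ℝ) := by
      intro w
      obtain ⟨z, hz, hzeq⟩ := exists_achiever hN w (mulE A w) ε hε
      have hZ : (0:ℝ) < ‖z‖^2 := by
        have := norm_pos_iff.mpr hz
        positivity
      have hH := H z w
      have hX : (p-2) * ((inner ℝ w z : ℝ) * (inner ℝ z (mulE A w) : ℝ))
          = ((p-2) * (inner ℝ w (mulE A w) : ℝ) - |p-2| * (‖w‖ * ‖mulE A w‖)) * ‖z‖^2 / 2 := by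
        rw [show (inner ℝ w z : ℝ) = (inner ℝ z w : ℝ) from real_inner_comm z w]
        linear_combination ((p-2)/2) * hzeq + (‖w‖ * ‖mulE A w‖ * ‖z‖^2 / 2) * heps
      rw [hX] at hH
      nlinarith [hH, hZ]
    have hinj : Function.Injective (mulE A) := by
      have hker : ∀ w : EuclideanSpace ℝ (Fin N), mulE A w = 0 → w = 0 := by
        intro w h0
        by_contra hwne
        have hk := key w
        rw [h0] at hk
        simp only [inner_zero_right, norm_zero, mul_zero, zero_mul] at hk
        have hwp : 0 < ‖w‖ := norm_pos_iff.mpr hwne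
        nlinarith [hk, mul_pos hγ (mul_pos hwp hwp)]
      intro x y hxy
      have hsub : mulE A (x - y) = 0 := by
        show Matrix.toEuclideanLin A (x - y) = 0
        rw [map_sub]
        show mulE A x - mulE A y = 0
        rw [hxy, sub_self]
      exact sub_eq_zero.mp (hker _ hsub)
    have hUnit : IsUnit A := (mulE_injective_iff A).mp hinj
    refine ⟨hUnit, ?_⟩
    set Lc := LinearMap.toContinuousLinearMap (Matrix.toEuclideanLin A) with hLcdef
    have hop : ∀ w : EuclideanSpace ℝ (Fin N), ‖mulE A w‖ ≤ ‖Lc‖ * ‖w‖ := by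
      intro w
      exact Lc.le_opNorm w
    obtain ⟨w0, hw0, -⟩ := exists_perp hN (0 : EuclideanSpace ℝ (Fin N))
    have hu0 : mulE A w0 ≠ 0 := by
      intro h
      apply hw0
      apply hinj
      rw [h]
      exact (map_zero (Matrix.toEuclideanLin A)).symm
    have hLcpos : 0 < ‖Lc‖ := by
      have h1 : 0 < ‖mulE A w0‖ := norm_pos_iff.mpr hu0
      have h2 := hop w0
      have h3 : 0 < ‖w0‖ := norm_pos_iff.mpr hw0
      nlinarith
    have hS : |p-2|/p + 2*γ/(p*‖Lc‖) ≤ mu1 A := by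
      unfold mu1
      apply le_csInf
      · exact ⟨_, w0, hw0, hu0, rfl⟩
      · rintro x ⟨w, hw, hu, rfl⟩
        have hwp : 0 < ‖w‖ := norm_pos_iff.mpr hw
        have hup : 0 < ‖mulE A w‖ := norm_pos_iff.mpr hu
        rw [le_div_iff₀ (by positivity)]
        have h1 := key w
        have h2 := hop w
        have hpl : 0 < p * ‖Lc‖ := by positivity
        rw [← mul_le_mul_iff_of_pos_right hpl]
        have hB : (|p-2|/p + 2*γ/(p*‖Lc‖)) * (‖w‖ * ‖mulE A w‖) * (p * ‖Lc‖)
            = (|p-2| * ‖Lc‖ + 2*γ) * (‖w‖ * ‖mulE A w‖) := by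
          field_simp [hp0.ne', hLcpos.ne']
        rw [hB]
        nlinarith [mul_le_mul_of_nonneg_right h1 hLcpos.le,
          mul_le_mul_of_nonneg_left h2 (by positivity : (0:ℝ) ≤ 2*γ*‖w‖)]
    have hpos : 0 < 2*γ/(p*‖Lc‖) := by positivity
    have habs : (0:ℝ) ≤ |p-2|/p := by positivity
    linarith
  · rintro ⟨hUnit, hμ⟩
    have hinj : Function.Injective (mulE A) := (mulE_injective_iff A).mpr hUnit
    have hbdd : BddBelow { x : ℝ | ∃ w : EuclideanSpace ℝ (Fin N), w ≠ 0 ∧ mulE A w ≠ 0 ∧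
        x = (inner ℝ w (mulE A w) : ℝ) / (‖w‖ * ‖mulE A w‖) } := by
      refine ⟨-1, ?_⟩
      rintro x ⟨w, hw, hu, rfl⟩
      have hwp : 0 < ‖w‖ := norm_pos_iff.mpr hw
      have hup : 0 < ‖mulE A w‖ := norm_pos_iff.mpr hu
      rw [le_div_iff₀ (by positivity)]
      have := abs_real_inner_le_norm w (mulE A w)
      have := neg_abs_le (inner ℝ w (mulE A w) : ℝ)
      nlinarith
    have hmain : ∀ w : EuclideanSpace ℝ (Fin N),
        mu1 A * (‖w‖ * ‖mulE A w‖) ≤ (inner ℝ w (mulE A w) : ℝ) := by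
      intro w
      rcases eq_or_ne w 0 with rfl | hw
      · simp
      have hu : mulE A w ≠ 0 := by
        intro h
        apply hw
        apply hinj
        rw [h]
        exact (map_zero (Matrix.toEuclideanLin A)).symm
      have hwp : 0 < ‖w‖ := norm_pos_iff.mpr hw
      have hup : 0 < ‖mulE A w‖ := norm_pos_iff.mpr hu
      have hle : mu1 A ≤ (inner ℝ w (mulE A w) : ℝ) / (‖w‖ * ‖mulE A w‖) :=
        csInf_le hbdd ⟨w, hw, hu, rfl⟩
      rw [le_div_iff₀ (by positivity)] at hle
      exact hle
    have hinj' : Function.Injective (Matrix.toEuclideanLin A) := hinj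
    set e := LinearEquiv.ofInjectiveEndo (Matrix.toEuclideanLin A) hinj' with hedef
    set M := LinearMap.toContinuousLinearMap (e.symm : EuclideanSpace ℝ (Fin N) →ₗ[ℝ]
      EuclideanSpace ℝ (Fin N)) with hMdef
    have hMc : ∀ w : EuclideanSpace ℝ (Fin N), ‖w‖ ≤ (‖M‖ + 1) * ‖mulE A w‖ := by
      intro w
      have h1 : M (mulE A w) = w := by
        show (e.symm : EuclideanSpace ℝ (Fin N) →ₗ[ℝ] EuclideanSpace ℝ (Fin N)) (mulE A w) = w
        have h2 : mulE A w = e w := rfl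
        rw [h2]
        exact e.symm_apply_apply w
      calc ‖w‖ = ‖M (mulE A w)‖ := by rw [h1]
        _ ≤ ‖M‖ * ‖mulE A w‖ := M.le_opNorm _
        _ ≤ (‖M‖+1) * ‖mulE A w‖ := by nlinarith [norm_nonneg (mulE A w)]
    have hM1 : (0:ℝ) < ‖M‖ + 1 := by positivity
    have hq : 0 < p * mu1 A - |p-2| := by
      have h1 : |p-2| < mu1 A * p := (div_lt_iff₀ hp0).mp hμ
      linarith
    refine ⟨(p * mu1 A - |p-2|) / (2 * (‖M‖+1)), by positivity, ?_⟩
    intro z w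
    have hpl := pointwise_lower p z w (mulE A w)
    have h1 := hmain w
    have h2 := hMc w
    have h4 : (p * mu1 A - |p-2|) * (‖w‖ * ‖mulE A w‖)
        ≤ p * (inner ℝ w (mulE A w) : ℝ) - |p-2| * (‖w‖ * ‖mulE A w‖) := by
      nlinarith [mul_le_mul_of_nonneg_left h1 hp0.le]
    have h5 : ‖w‖^2 ≤ (‖M‖+1) * (‖w‖ * ‖mulE A w‖) := by
      nlinarith [h2, norm_nonneg w]
    have hγeq : 2 * ((p * mu1 A - |p-2|) / (2 * (‖M‖+1))) * (‖M‖+1) = p * mu1 A - |p-2| := by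
      field_simp
    have h6 : 2 * ((p * mu1 A - |p-2|)/(2*(‖M‖+1))) * ‖w‖^2
        ≤ p * (inner ℝ w (mulE A w) : ℝ) - |p-2| * (‖w‖ * ‖mulE A w‖) := by
      have hγ' : 0 < (p * mu1 A - |p-2|)/(2*(‖M‖+1)) := by positivity
      calc 2 * ((p * mu1 A - |p-2|)/(2*(‖M‖+1))) * ‖w‖^2
          ≤ 2 * ((p * mu1 A - |p-2|)/(2*(‖M‖+1))) * ((‖M‖+1) * (‖w‖ * ‖mulE A w‖)) := by
            nlinarith [h5, hγ'.le]
        _ = (p * mu1 A - |p-2|) * (‖w‖ * ‖mulE A w‖) := by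
            rw [show (2:ℝ) * ((p * mu1 A - |p-2|)/(2*(‖M‖+1))) * ((‖M‖+1) * (‖w‖ * ‖mulE A w‖))
              = (2 * ((p * mu1 A - |p-2|) / (2 * (‖M‖+1))) * (‖M‖+1)) * (‖w‖ * ‖mulE A w‖)
              from by ring, hγeq]
        _ ≤ _ := h4
    nlinarith [hpl, mul_le_mul_of_nonneg_left h6 (sq_nonneg ‖z‖)]
end

section
/- Let N ≥ 2, let A ∈ ℝ^{N,N}, let b ∈ ℝ with b > −1, and let γ_A > 0. Then the following two statements are equivalent: (i) |z|²·⟨w,Aw⟩ + b·⟨w,z⟩·⟨z,Aw⟩ ≥ γ_A·|z|²·|w|² for all w, z ∈ ℝ^N; (ii) (1 + b/2)·⟨w,Aw⟩ − (|b|/2)·|Aw| ≥ γ_A for all w ∈ ℝ^N with |w| = 1. -/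
open RealInnerProductSpace

lemma mulE_smul {N : ℕ} (A : Matrix (Fin N) (Fin N) ℝ) (c : ℝ)
    (w : EuclideanSpace ℝ (Fin N)) : mulE A (c • w) = c • mulE A w := by
  simp [mulE]

/-- Reflection bound: for a unit vector `z`, `|2⟪u,z⟫⟪z,v⟫ - ⟪u,v⟫| ≤ ‖u‖‖v‖`. -/
lemma refl_bound {E : Type*} [NormedAddCommGroup E] [InnerProductSpace ℝ E]
    (u v z : E) (hz : ‖z‖ = 1) :
    |2 * ⟪u, z⟫ * ⟪z, v⟫ - ⟪u, v⟫| ≤ ‖u‖ * ‖v‖ := by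
  have h1 : ⟪(2 * ⟪u, z⟫) • z - u, v⟫ = 2 * ⟪u, z⟫ * ⟪z, v⟫ - ⟪u, v⟫ := by
    simp [inner_sub_left, real_inner_smul_left]
  have h2 : ‖(2 * ⟪u, z⟫) • z - u‖ = ‖u‖ := by
    have hsq : ‖(2 * ⟪u, z⟫) • z - u‖ ^ 2 = ‖u‖ ^ 2 := by
      rw [norm_sub_sq_real, norm_smul, real_inner_smul_left, real_inner_comm u z]
      simp only [hz, Real.norm_eq_abs, mul_one]
      rw [sq_abs]
      ring
    exact (sq_eq_sq₀ (norm_nonneg _) (norm_nonneg _)).mp hsq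
  calc |2 * ⟪u, z⟫ * ⟪z, v⟫ - ⟪u, v⟫| = |⟪(2 * ⟪u, z⟫) • z - u, v⟫| := by rw [h1]
    _ ≤ ‖(2 * ⟪u, z⟫) • z - u‖ * ‖v‖ := abs_real_inner_le_norm _ _
    _ = ‖u‖ * ‖v‖ := by rw [h2]

/-- Attainment: for a unit vector `u` and `v` with `‖v‖ + σ⟪u,v⟫ ≠ 0`, `σ = ±1`,
there is a unit `z` with `⟪u,z⟫⟪z,v⟫ = (⟪u,v⟫ + σ‖v‖)/2`. -/
lemma attain {E : Type*} [NormedAddCommGroup E] [InnerProductSpace ℝ E]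
    (u v : E) (hu : ‖u‖ = 1) (σ : ℝ) (hσ : σ = 1 ∨ σ = -1) (hv : v ≠ 0)
    (h : ‖v‖ + σ * ⟪u, v⟫ ≠ 0) :
    ∃ z : E, ‖z‖ = 1 ∧ ⟪u, z⟫ * ⟪z, v⟫ = (⟪u, v⟫ + σ * ‖v‖) / 2 := by
  set s := ‖v‖ with hs
  have hs0 : 0 < s := norm_pos_iff.mpr hv
  set t := ⟪u, v⟫ with ht
  set c := u + (σ / s) • v with hc
  have hσ2 : σ ^ 2 = 1 := by rcases hσ with h | h <;> simp [h]
  have huc : ⟪u, c⟫ = 1 + σ * t / s := by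
    rw [hc, inner_add_right, real_inner_smul_right, real_inner_self_eq_norm_sq, hu]
    ring
  have hcv : ⟪c, v⟫ = t + σ * s := by
    rw [hc, inner_add_left, real_inner_smul_left, real_inner_self_eq_norm_sq, ← hs, ← ht]
    field_simp
  have hcc : ‖c‖ ^ 2 = 2 * (s + σ * t) / s := by
    rw [← real_inner_self_eq_norm_sq, hc]
    rw [inner_add_left, inner_add_right, inner_add_right, real_inner_smul_left,
      real_inner_smul_left, real_inner_smul_right, real_inner_smul_right,
      real_inner_self_eq_norm_sq, real_inner_self_eq_norm_sq, hu, ← hs,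
      real_inner_comm u v, ← ht]
    rcases hσ with h' | h' <;> rw [h'] <;> field_simp <;> ring
  have hst : s + σ * t ≠ 0 := h
  have hcpos : 0 < ‖c‖ ^ 2 := by
    rw [hcc]
    rcases lt_or_gt_of_ne hst with h0 | h0
    · exfalso
      have hts : |t| ≤ s := by
        have := abs_real_inner_le_norm u v
        rw [hu, one_mul] at this; exact this
      rcases hσ with hσ' | hσ' <;> rw [hσ'] at h0 <;>
        cases' abs_le.mp hts with h1 h2 <;> linarith
    · positivity
  have hcne : c ≠ 0 := by
    intro h0
    rw [h0] at hcpos; simp at hcpos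
  refine ⟨‖c‖⁻¹ • c, ?_, ?_⟩
  · rw [norm_smul]
    simp [norm_ne_zero_iff.mpr hcne]
  · rw [real_inner_smul_right, real_inner_smul_left, huc, hcv]
    have hcn : ‖c‖ ≠ 0 := norm_ne_zero_iff.mpr hcne
    have key : ‖c‖⁻¹ * ‖c‖⁻¹ = s / (2 * (s + σ * t)) := by
      rw [← mul_inv]
      rw [show ‖c‖ * ‖c‖ = ‖c‖ ^ 2 by ring, hcc]
      field_simp
    rw [show ‖c‖⁻¹ * (1 + σ * t / s) * (‖c‖⁻¹ * (t + σ * s))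
      = (‖c‖⁻¹ * ‖c‖⁻¹) * ((1 + σ * t / s) * (t + σ * s)) by ring, key]
    field_simp

/-- In `EuclideanSpace ℝ (Fin N)` with `N ≥ 2`, every unit vector has a unit orthogonal
vector. -/
lemma exists_perp_s2 {N : ℕ} (hN : 2 ≤ N) (u : EuclideanSpace ℝ (Fin N)) (hu : ‖u‖ = 1) :
    ∃ z : EuclideanSpace ℝ (Fin N), ‖z‖ = 1 ∧ ⟪u, z⟫ = 0 := by
  have hune : u ≠ 0 := by
    intro h; rw [h] at hu; simp at hu
  have hbot : (Submodule.span ℝ {u})ᗮ ≠ ⊥ := by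
    intro h
    have htop : Submodule.span ℝ {u} = ⊤ := Submodule.orthogonal_eq_bot_iff.mp h
    have h1 : Module.finrank ℝ (Submodule.span ℝ {u} : Submodule ℝ (EuclideanSpace ℝ (Fin N)))
        = 1 := finrank_span_singleton hune
    rw [htop] at h1
    have h2 : Module.finrank ℝ (⊤ : Submodule ℝ (EuclideanSpace ℝ (Fin N)))
        = N := by
      rw [finrank_top]
      simp
    omega
  obtain ⟨z, hzmem, hzne⟩ := Submodule.ne_bot_iff _ |>.mp hbot
  refine ⟨‖z‖⁻¹ • z, ?_, ?_⟩
  · rw [norm_smul]; simp [norm_ne_zero_iff.mpr hzne]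
  · rw [real_inner_smul_right]
    have : ⟪u, z⟫ = 0 := hzmem u (Submodule.mem_span_singleton_self u)
    rw [this]; ring

/-- Key pointwise inequality for unit vectors, backward direction. -/
lemma key_unit {N : ℕ} (A : Matrix (Fin N) (Fin N) ℝ) (b : ℝ)
    (w z : EuclideanSpace ℝ (Fin N)) (hw : ‖w‖ = 1) (hz : ‖z‖ = 1) :
    ⟪w, mulE A w⟫ + b * (⟪w, z⟫ * ⟪z, mulE A w⟫)
      ≥ (1 + b / 2) * ⟪w, mulE A w⟫ - (|b| / 2) * ‖mulE A w‖ := by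
  have hb := refl_bound w (mulE A w) z hz
  rw [hw, one_mul] at hb
  cases' abs_le.mp hb with h1 h2
  rcases le_or_gt 0 b with hbs | hbs
  · rw [abs_of_nonneg hbs]; nlinarith
  · rw [abs_of_neg hbs]; nlinarith

/-- Equivalence of the two forms of the `L^p`-dissipativity condition for real matrices
(`N ≥ 2`). -/
theorem stmt_2 {N : ℕ} (hN : 2 ≤ N) (A : Matrix (Fin N) (Fin N) ℝ) (b : ℝ)
    (hb : -1 < b) (γ_A : ℝ) (hγ : 0 < γ_A) :
    (∀ w z : EuclideanSpace ℝ (Fin N),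
      ‖z‖ ^ 2 * (inner ℝ w (mulE A w) : ℝ)
        + b * ((inner ℝ w z : ℝ) * (inner ℝ z (mulE A w) : ℝ))
        ≥ γ_A * (‖z‖ ^ 2 * ‖w‖ ^ 2))
    ↔ (∀ w : EuclideanSpace ℝ (Fin N), ‖w‖ = 1 →
      (1 + b / 2) * (inner ℝ w (mulE A w) : ℝ) - (|b| / 2) * ‖mulE A w‖ ≥ γ_A) := by
  constructor
  · -- (i) → (ii)
    intro hi w hw
    by_cases hvz : mulE A w = 0
    · exfalso
      have h0 := hi w w
      rw [hvz] at h0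
      simp [hw] at h0
      linarith
    · have hs0 : 0 < ‖mulE A w‖ := norm_pos_iff.mpr hvz
      set σ : ℝ := if 0 ≤ b then -1 else 1 with hσdef
      have hσ : σ = 1 ∨ σ = -1 := by rw [hσdef]; split <;> simp
      by_cases hst : ‖mulE A w‖ + σ * ⟪w, mulE A w⟫ = 0
      · obtain ⟨z, hz1, hz2⟩ := exists_perp_s2 hN w hw
        have h0 := hi w z
        rw [hz1, hw, hz2] at h0
        simp only [one_pow, one_mul, mul_one, zero_mul, mul_zero, add_zero] at h0
        rcases le_or_gt 0 b with hbs | hbs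
        · have hσ' : σ = -1 := by rw [hσdef, if_pos hbs]
          rw [hσ'] at hst
          have hsw : ‖mulE A w‖ = (inner ℝ w (mulE A w) : ℝ) := by linarith
          rw [abs_of_nonneg hbs, hsw]
          linarith
        · have hσ' : σ = 1 := by rw [hσdef, if_neg (not_le.mpr hbs)]
          rw [hσ'] at hst
          linarith
      · obtain ⟨z, hz1, hz2⟩ := attain w (mulE A w) hw σ hσ hvz hst
        have h0 := hi w z
        rw [hz1, hw, hz2] at h0
        simp only [one_pow, one_mul, mul_one] at h0
        rcases le_or_gt 0 b with hbs | hbs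
        · have hσ' : σ = -1 := by rw [hσdef, if_pos hbs]
          rw [hσ'] at h0
          rw [abs_of_nonneg hbs]
          linarith
        · have hσ' : σ = 1 := by rw [hσdef, if_neg (not_le.mpr hbs)]
          rw [hσ'] at h0
          rw [abs_of_neg hbs]
          linarith
  · -- (ii) → (i)
    intro hii w z
    by_cases hw0 : w = 0
    · subst hw0
      simp [mulE]
    by_cases hz0 : z = 0
    · subst hz0
      simp
    have hwn : (0:ℝ) < ‖w‖ := norm_pos_iff.mpr hw0
    have hzn : (0:ℝ) < ‖z‖ := norm_pos_iff.mpr hz0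
    set w' : EuclideanSpace ℝ (Fin N) := ‖w‖⁻¹ • w with hw'
    set z' : EuclideanSpace ℝ (Fin N) := ‖z‖⁻¹ • z with hz'
    have hw'1 : ‖w'‖ = 1 := by
      rw [hw', norm_smul]; simp [hwn.ne']
    have hz'1 : ‖z'‖ = 1 := by
      rw [hz', norm_smul]; simp [hzn.ne']
    have hkey := key_unit A b w' z' hw'1 hz'1
    have hii' := hii w' hw'1
    have hmain : ⟪w', mulE A w'⟫ + b * (⟪w', z'⟫ * ⟪z', mulE A w'⟫) ≥ γ_A := by
      calc ⟪w', mulE A w'⟫ + b * (⟪w', z'⟫ * ⟪z', mulE A w'⟫)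
          ≥ (1 + b / 2) * ⟪w', mulE A w'⟫ - (|b| / 2) * ‖mulE A w'‖ := hkey
        _ ≥ γ_A := hii'
    -- now scale back
    have e1 : mulE A w' = ‖w‖⁻¹ • mulE A w := by rw [hw', mulE_smul]
    have e2 : ⟪w', mulE A w'⟫ = ‖w‖⁻¹ * ‖w‖⁻¹ * ⟪w, mulE A w⟫ := by
      rw [e1, hw', real_inner_smul_left, real_inner_smul_right]; ring
    have e3 : ⟪w', z'⟫ = ‖w‖⁻¹ * ‖z‖⁻¹ * ⟪w, z⟫ := by
      rw [hw', hz', real_inner_smul_left, real_inner_smul_right]; ring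
    have e4 : ⟪z', mulE A w'⟫ = ‖z‖⁻¹ * ‖w‖⁻¹ * ⟪z, mulE A w⟫ := by
      rw [e1, hz', real_inner_smul_left, real_inner_smul_right]; ring
    rw [e2, e3, e4] at hmain
    have hfactor : ‖z‖ ^ 2 * ⟪w, mulE A w⟫ + b * (⟪w, z⟫ * ⟪z, mulE A w⟫)
        = (‖z‖ ^ 2 * ‖w‖ ^ 2) * (‖w‖⁻¹ * ‖w‖⁻¹ * ⟪w, mulE A w⟫
          + b * ((‖w‖⁻¹ * ‖z‖⁻¹ * ⟪w, z⟫) * (‖z‖⁻¹ * ‖w‖⁻¹ * ⟪z, mulE A w⟫))) := by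
      field_simp
    rw [ge_iff_le, hfactor]
    rw [mul_comm γ_A _]
    apply mul_le_mul_of_nonneg_left hmain (by positivity)
end

section
/- Let N ≥ 2, let A ∈ ℝ^{N,N}, let b ∈ ℝ, and let w ∈ ℝ^N with |w| = 1. Then the minimum over all z ∈ ℝ^N with |z| = 1 of the quantity ⟨w,Aw⟩ + b·⟨w,z⟩·⟨z,Aw⟩ exists and equals (1 + b/2)·⟨w,Aw⟩ − (|b|/2)·|Aw|. -/
lemma aux_arith (s t α c b : ℝ) (hs2 : s ^ 2 ≤ 1) (ht2 : t ^ 2 ≤ c ^ 2) (hc0 : 0 ≤ c)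
    (key : (α - s * t) ^ 2 ≤ (1 - s ^ 2) * (c ^ 2 - t ^ 2)) :
    (1 + b / 2) * α - (|b| / 2) * c ≤ α + b * (s * t) := by
  have hstc : 0 ≤ s * t + c ∧ 0 ≤ c - s * t := by
    constructor <;>
      nlinarith [sq_nonneg (s*t + c), sq_nonneg (s*t - c), sq_nonneg s, sq_nonneg t,
        mul_le_mul hs2 ht2 (sq_nonneg t) zero_le_one]
  rcases le_or_gt 0 b with hb | hb
  · rw [abs_of_nonneg hb]
    have hmin : α - c ≤ 2 * (s * t) := by
      nlinarith [sq_nonneg (c*s + t), hstc.1, key]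
    nlinarith [mul_nonneg hb (by linarith : (0:ℝ) ≤ 2 * (s*t) - α + c)]
  · rw [abs_of_neg hb]
    have hmax : 2 * (s * t) ≤ α + c := by
      nlinarith [sq_nonneg (c*s - t), hstc.2, key]
    nlinarith [mul_nonneg (neg_pos.mpr hb).le (by linarith : (0:ℝ) ≤ α + c - 2*(s*t))]

lemma aux_mem_pos (n c α : ℝ) (hn2 : n ^ 2 = 2 * c * (c - α)) (hc1 : 0 < c) (hc2 : 0 < c - α) :
    (n⁻¹ * (c - α)) * (n⁻¹ * (c * α - c ^ 2)) = (α - c) / 2 := by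
  have h2 : n⁻¹ * n⁻¹ = (2 * c * (c - α))⁻¹ := by
    rw [← mul_inv, ← pow_two, hn2]
  calc (n⁻¹ * (c - α)) * (n⁻¹ * (c * α - c ^ 2))
      = (n⁻¹ * n⁻¹) * ((c - α) * (c * α - c ^ 2)) := by ring
    _ = (2 * c * (c - α))⁻¹ * ((c - α) * (c * α - c ^ 2)) := by rw [h2]
    _ = (α - c) / 2 := by field_simp

lemma aux_mem_neg (n c α : ℝ) (hn2 : n ^ 2 = 2 * c * (c + α)) (hc1 : 0 < c) (hc2 : 0 < c + α) :
    (n⁻¹ * (c + α)) * (n⁻¹ * (c * α + c ^ 2)) = (α + c) / 2 := by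
  have h2 : n⁻¹ * n⁻¹ = (2 * c * (c + α))⁻¹ := by
    rw [← mul_inv, ← pow_two, hn2]
  calc (n⁻¹ * (c + α)) * (n⁻¹ * (c * α + c ^ 2))
      = (n⁻¹ * n⁻¹) * ((c + α) * (c * α + c ^ 2)) := by ring
    _ = (2 * c * (c + α))⁻¹ * ((c + α) * (c * α + c ^ 2)) := by rw [h2]
    _ = (α + c) / 2 := by field_simp

lemma key_ineq {N : ℕ} (w v z : EuclideanSpace ℝ (Fin N)) (hw : ‖w‖ = 1) (hz : ‖z‖ = 1) :
    ((inner ℝ w v : ℝ) - (inner ℝ w z : ℝ) * (inner ℝ z v : ℝ)) ^ 2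
      ≤ (1 - (inner ℝ w z : ℝ) ^ 2) * (‖v‖ ^ 2 - (inner ℝ z v : ℝ) ^ 2) := by
  have h1 : (inner ℝ (w - (inner ℝ w z : ℝ) • z) (v - (inner ℝ z v : ℝ) • z) : ℝ)
      = (inner ℝ w v : ℝ) - (inner ℝ w z : ℝ) * (inner ℝ z v : ℝ) := by
    simp only [inner_sub_left, inner_sub_right, real_inner_smul_left, real_inner_smul_right]
    rw [real_inner_self_eq_norm_sq z, hz, real_inner_comm z w]
    ring
  have h2 : ‖w - (inner ℝ w z : ℝ) • z‖ ^ 2 = 1 - (inner ℝ w z : ℝ) ^ 2 := by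
    rw [norm_sub_sq_real, real_inner_smul_right, norm_smul, hw, hz, Real.norm_eq_abs]
    rw [mul_one, one_pow, sq_abs]
    ring
  have h3 : ‖v - (inner ℝ z v : ℝ) • z‖ ^ 2 = ‖v‖ ^ 2 - (inner ℝ z v : ℝ) ^ 2 := by
    rw [norm_sub_sq_real, real_inner_smul_right, real_inner_comm v z, norm_smul, hz,
      Real.norm_eq_abs, mul_one, sq_abs]
    ring
  have h4 := abs_real_inner_le_norm (w - (inner ℝ w z : ℝ) • z) (v - (inner ℝ z v : ℝ) • z)
  rw [h1] at h4
  nlinarith [abs_nonneg ((inner ℝ w v : ℝ) - (inner ℝ w z : ℝ) * (inner ℝ z v : ℝ)),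
    sq_abs ((inner ℝ w v : ℝ) - (inner ℝ w z : ℝ) * (inner ℝ z v : ℝ)),
    norm_nonneg (w - (inner ℝ w z : ℝ) • z), norm_nonneg (v - (inner ℝ z v : ℝ) • z)]

lemma exists_unit_orth {N : ℕ} (hN : 2 ≤ N) (w : EuclideanSpace ℝ (Fin N)) :
    ∃ z : EuclideanSpace ℝ (Fin N), ‖z‖ = 1 ∧ (inner ℝ w z : ℝ) = 0 := by
  have hspan : (ℝ ∙ w) ≠ ⊤ := by
    intro h
    have h1 : Module.finrank ℝ (ℝ ∙ w) ≤ 1 := by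
      by_cases hw0 : w = 0
      · subst hw0; rw [Submodule.span_zero_singleton]; simp
      · rw [finrank_span_singleton hw0]
    rw [h, finrank_top] at h1
    simp [finrank_euclideanSpace_fin] at h1
    omega
  have horth : (ℝ ∙ w)ᗮ ≠ ⊥ := by
    intro h
    exact hspan (Submodule.orthogonal_eq_bot_iff.mp h)
  obtain ⟨y, hy, hy0⟩ := Submodule.exists_mem_ne_zero_of_ne_bot horth
  refine ⟨(‖y‖⁻¹ : ℝ) • y, norm_smul_inv_norm hy0, ?_⟩
  have h2 := hy w (Submodule.mem_span_singleton_self w)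
  rw [real_inner_smul_right, h2, mul_zero]

/-- For a unit vector `w`, the minimum over unit vectors `z` of
`⟨w,Aw⟩ + b·⟨w,z⟩·⟨z,Aw⟩` exists and equals `(1 + b/2)·⟨w,Aw⟩ − (|b|/2)·|Aw|` (`N ≥ 2`). -/
theorem stmt_9 {N : ℕ} (hN : 2 ≤ N) (A : Matrix (Fin N) (Fin N) ℝ) (b : ℝ)
    (w : EuclideanSpace ℝ (Fin N)) (hw : ‖w‖ = 1) :
    IsLeast {x : ℝ | ∃ z : EuclideanSpace ℝ (Fin N), ‖z‖ = 1 ∧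
        x = (inner ℝ w (mulE A w) : ℝ) + b * ((inner ℝ w z : ℝ) * (inner ℝ z (mulE A w) : ℝ))}
      ((1 + b / 2) * (inner ℝ w (mulE A w) : ℝ) - (|b| / 2) * ‖mulE A w‖) := by
  have hαc : (inner ℝ w (mulE A w) : ℝ) ≤ ‖mulE A w‖ ∧ -‖mulE A w‖ ≤ (inner ℝ w (mulE A w) : ℝ) := by
    have h := abs_real_inner_le_norm w (mulE A w)
    rw [hw, one_mul] at h
    exact ⟨le_trans (le_abs_self _) h, neg_le_of_abs_le h⟩
  constructor
  · -- membership : exhibit a minimizer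
    rcases le_or_gt 0 b with hb | hb
    · by_cases hveq : ‖mulE A w‖ • w = mulE A w
      · obtain ⟨z, hz1, hz0⟩ := exists_unit_orth hN w
        refine ⟨z, hz1, ?_⟩
        have hα : (inner ℝ w (mulE A w) : ℝ) = ‖mulE A w‖ := by
          conv_lhs => rw [← hveq]
          rw [real_inner_smul_right, real_inner_self_eq_norm_sq, hw]; ring
        rw [hz0, abs_of_nonneg hb, hα]; ring
      · have hne : ‖mulE A w‖ • w - mulE A w ≠ 0 := sub_ne_zero.mpr hveq
        refine ⟨(‖(‖mulE A w‖ • w - mulE A w)‖⁻¹ : ℝ) • (‖mulE A w‖ • w - mulE A w),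
          norm_smul_inv_norm hne, ?_⟩
        have hn2 : ‖(‖mulE A w‖ • w - mulE A w)‖ ^ 2
            = 2 * ‖mulE A w‖ * (‖mulE A w‖ - (inner ℝ w (mulE A w) : ℝ)) := by
          rw [norm_sub_sq_real, norm_smul, hw, real_inner_smul_left, Real.norm_eq_abs,
            abs_of_nonneg (norm_nonneg (mulE A w))]
          ring
        have hs : (inner ℝ w ((‖(‖mulE A w‖ • w - mulE A w)‖⁻¹ : ℝ) • (‖mulE A w‖ • w - mulE A w)) : ℝ)
            = ‖(‖mulE A w‖ • w - mulE A w)‖⁻¹ * (‖mulE A w‖ - (inner ℝ w (mulE A w) : ℝ)) := by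
          rw [real_inner_smul_right, inner_sub_right, real_inner_smul_right,
            real_inner_self_eq_norm_sq, hw]
          ring
        have ht : (inner ℝ ((‖(‖mulE A w‖ • w - mulE A w)‖⁻¹ : ℝ) • (‖mulE A w‖ • w - mulE A w)) (mulE A w) : ℝ)
            = ‖(‖mulE A w‖ • w - mulE A w)‖⁻¹ * (‖mulE A w‖ * (inner ℝ w (mulE A w) : ℝ) - ‖mulE A w‖ ^ 2) := by
          rw [real_inner_smul_left, inner_sub_left, real_inner_smul_left,
            real_inner_self_eq_norm_sq]
        have hcpos : 0 < 2 * ‖mulE A w‖ * (‖mulE A w‖ - (inner ℝ w (mulE A w) : ℝ)) := by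
          rw [← hn2]
          have : ‖(‖mulE A w‖ • w - mulE A w)‖ ≠ 0 := norm_ne_zero_iff.mpr hne
          positivity
        have hc1 : 0 < ‖mulE A w‖ := by nlinarith [norm_nonneg (mulE A w), hαc.1]
        have hc2 : 0 < ‖mulE A w‖ - (inner ℝ w (mulE A w) : ℝ) := by nlinarith [hαc.1]
        rw [hs, ht, aux_mem_pos _ _ _ hn2 hc1 hc2, abs_of_nonneg hb]
        ring
    · by_cases hveq : ‖mulE A w‖ • w + mulE A w = 0
      · obtain ⟨z, hz1, hz0⟩ := exists_unit_orth hN w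
        refine ⟨z, hz1, ?_⟩
        have hveq' : mulE A w = -(‖mulE A w‖ • w) := by
          rw [eq_neg_iff_add_eq_zero, add_comm]; exact hveq
        have hα : (inner ℝ w (mulE A w) : ℝ) = -‖mulE A w‖ := by
          conv_lhs => rw [hveq']
          rw [inner_neg_right, real_inner_smul_right, real_inner_self_eq_norm_sq, hw]
          ring
        rw [hz0, abs_of_neg hb, hα]; ring
      · have hne : ‖mulE A w‖ • w + mulE A w ≠ 0 := hveq
        refine ⟨(‖(‖mulE A w‖ • w + mulE A w)‖⁻¹ : ℝ) • (‖mulE A w‖ • w + mulE A w),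
          norm_smul_inv_norm hne, ?_⟩
        have hn2 : ‖(‖mulE A w‖ • w + mulE A w)‖ ^ 2
            = 2 * ‖mulE A w‖ * (‖mulE A w‖ + (inner ℝ w (mulE A w) : ℝ)) := by
          rw [norm_add_sq_real, norm_smul, hw, real_inner_smul_left, Real.norm_eq_abs,
            abs_of_nonneg (norm_nonneg (mulE A w))]
          ring
        have hs : (inner ℝ w ((‖(‖mulE A w‖ • w + mulE A w)‖⁻¹ : ℝ) • (‖mulE A w‖ • w + mulE A w)) : ℝ)
            = ‖(‖mulE A w‖ • w + mulE A w)‖⁻¹ * (‖mulE A w‖ + (inner ℝ w (mulE A w) : ℝ)) := by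
          rw [real_inner_smul_right, inner_add_right, real_inner_smul_right,
            real_inner_self_eq_norm_sq, hw]
          ring
        have ht : (inner ℝ ((‖(‖mulE A w‖ • w + mulE A w)‖⁻¹ : ℝ) • (‖mulE A w‖ • w + mulE A w)) (mulE A w) : ℝ)
            = ‖(‖mulE A w‖ • w + mulE A w)‖⁻¹ * (‖mulE A w‖ * (inner ℝ w (mulE A w) : ℝ) + ‖mulE A w‖ ^ 2) := by
          rw [real_inner_smul_left, inner_add_left, real_inner_smul_left,
            real_inner_self_eq_norm_sq]
        have hcpos : 0 < 2 * ‖mulE A w‖ * (‖mulE A w‖ + (inner ℝ w (mulE A w) : ℝ)) := by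
          rw [← hn2]
          have : ‖(‖mulE A w‖ • w + mulE A w)‖ ≠ 0 := norm_ne_zero_iff.mpr hne
          positivity
        have hc1 : 0 < ‖mulE A w‖ := by nlinarith [norm_nonneg (mulE A w), hαc.2]
        have hc2 : 0 < ‖mulE A w‖ + (inner ℝ w (mulE A w) : ℝ) := by nlinarith [hαc.2]
        rw [hs, ht, aux_mem_neg _ _ _ hn2 hc1 hc2, abs_of_neg hb]
        ring
  · rintro x ⟨z, hz, rfl⟩
    have hs2 : (inner ℝ w z : ℝ) ^ 2 ≤ 1 := by
      have h := abs_real_inner_le_norm w z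
      rw [hw, hz, one_mul] at h
      nlinarith [abs_nonneg (inner ℝ w z : ℝ), sq_abs (inner ℝ w z : ℝ)]
    have ht2 : (inner ℝ z (mulE A w) : ℝ) ^ 2 ≤ ‖mulE A w‖ ^ 2 := by
      have h := abs_real_inner_le_norm z (mulE A w)
      rw [hz, one_mul] at h
      nlinarith [abs_nonneg (inner ℝ z (mulE A w) : ℝ), sq_abs (inner ℝ z (mulE A w) : ℝ)]
    exact aux_arith _ _ _ _ _ hs2 ht2 (norm_nonneg _) (key_ineq w (mulE A w) z hw hz)
end

section
/- Let α ∈ ℂ and 1 < p < ∞. Then there exists γ_α > 0 such that (p/2)·Re α − (|p−2|/2)·|α| ≥ γ_α if and only if (|p−2|/(2·√(p−1)))·|Im α| < Re α. -/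
set_option maxHeartbeats 800000

/-- The scalar complex cone condition: existence of `γ_α > 0` with
`(p/2)·Re α − (|p−2|/2)·|α| ≥ γ_α` is equivalent to
`(|p−2|/(2√(p−1)))·|Im α| < Re α`. -/
theorem stmt_11 (α : ℂ) (p : ℝ) (hp1 : 1 < p) :
    (∃ γ_α : ℝ, 0 < γ_α ∧ p / 2 * α.re - |p - 2| / 2 * ‖α‖ ≥ γ_α)
    ↔ |p - 2| / (2 * Real.sqrt (p - 1)) * |α.im| < α.re := by
  set x := α.re with hx
  set y := α.im with hyy
  set A := ‖α‖ with hAdef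
  have hA2 : A ^ 2 = x ^ 2 + y ^ 2 := by
    rw [hAdef, Complex.sq_norm, Complex.normSq_apply]; ring
  have hA0 : 0 ≤ A := norm_nonneg α
  have hs : 0 < Real.sqrt (p - 1) := Real.sqrt_pos.mpr (by linarith)
  have hs2 : Real.sqrt (p - 1) ^ 2 = p - 1 := Real.sq_sqrt (by linarith)
  have hk : 0 ≤ |p - 2| := abs_nonneg _
  have hk2 : |p - 2| ^ 2 = (p - 2) ^ 2 := sq_abs _
  have hy : 0 ≤ |y| := abs_nonneg _
  have hy2 : |y| ^ 2 = y ^ 2 := sq_abs _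
  have e1 : (|p - 2| * A) ^ 2 = (p - 2) ^ 2 * x ^ 2 + (p - 2) ^ 2 * y ^ 2 := by
    rw [mul_pow, hk2, hA2]; ring
  have e2 : (2 * Real.sqrt (p - 1) * x) ^ 2 = 4 * (p - 1) * x ^ 2 := by
    rw [mul_pow, mul_pow, hs2]; ring
  have e3 : (|p - 2| * |y|) ^ 2 = (p - 2) ^ 2 * y ^ 2 := by
    rw [mul_pow, hk2, hy2]
  have e4 : (p * x) ^ 2 = (p - 2) ^ 2 * x ^ 2 + 4 * (p - 1) * x ^ 2 := by ring
  constructor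
  · rintro ⟨γ, hγ, hγ'⟩
    have hL : 0 < p / 2 * x - |p - 2| / 2 * A := lt_of_lt_of_le hγ hγ'
    have h1 : |p - 2| * A < p * x := by linarith
    have hxabs : |x| ≤ A := by
      rw [hAdef]; exact Complex.abs_re_le_norm α
    have hxpos : 0 < x := by
      nlinarith [abs_nonneg x, le_abs_self x, mul_nonneg hk hA0]
    have h2 : (|p - 2| * A) ^ 2 < (p * x) ^ 2 := by
      nlinarith [mul_nonneg hk hA0]
    have h3 : (|p - 2| * |y|) ^ 2 < (2 * Real.sqrt (p - 1) * x) ^ 2 := by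
      linarith [h2, e1, e2, e3, e4]
    have h4 : |p - 2| * |y| < 2 * Real.sqrt (p - 1) * x := by
      have hpos : 0 < 2 * Real.sqrt (p - 1) * x := by positivity
      nlinarith [mul_nonneg hk hy, h3, hpos]
    rw [div_mul_eq_mul_div, div_lt_iff₀ (by positivity)]
    linarith
  · intro h
    rw [div_mul_eq_mul_div, div_lt_iff₀ (by positivity)] at h
    have hxpos : 0 < x := by
      nlinarith [mul_nonneg hk hy, hs]
    have h4 : |p - 2| * |y| < 2 * Real.sqrt (p - 1) * x := by linarith
    have h3 : (|p - 2| * |y|) ^ 2 < (2 * Real.sqrt (p - 1) * x) ^ 2 := by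
      nlinarith [mul_nonneg hk hy]
    have h2 : (|p - 2| * A) ^ 2 < (p * x) ^ 2 := by
      linarith [h3, e1, e2, e3, e4]
    have h1 : |p - 2| * A < p * x := by
      have hpx : 0 < p * x := by nlinarith
      nlinarith [mul_nonneg hk hA0, h2, hpx]
    refine ⟨p / 2 * x - |p - 2| / 2 * A, by linarith, le_refl _⟩
end

section
/- Let α ∈ ℂ with α ≠ 0 and let 1 < p < ∞. Then (|p−2|/(2·√(p−1)))·|Im α| < Re α if and only if |arg α| < arccos(|p−2|/p), where arg α ∈ (−π, π] denotes the principal argument of α. -/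
/-- The two forms of the scalar complex cone condition are equivalent:
`(|p−2|/(2√(p−1)))·|Im α| < Re α ↔ |arg α| < arccos(|p−2|/p)`. -/
theorem stmt_12 (α : ℂ) (hα : α ≠ 0) (p : ℝ) (hp1 : 1 < p) :
    |p - 2| / (2 * Real.sqrt (p - 1)) * |α.im| < α.re
    ↔ |α.arg| < Real.arccos (|p - 2| / p) := by
  have hp0 : (0:ℝ) < p := by linarith
  have hs0 : (0:ℝ) < Real.sqrt (p - 1) := Real.sqrt_pos.2 (by linarith)
  have hs2 : Real.sqrt (p-1) ^ 2 = p - 1 := Real.sq_sqrt (by linarith)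
  have habs : 0 < ‖α‖ := norm_pos_iff.mpr hα
  have hk0 : (0:ℝ) ≤ |p - 2| := abs_nonneg _
  have hklt : |p - 2| < p := abs_lt.2 ⟨by linarith, by linarith⟩
  have ht1 : |p - 2| / p ≤ 1 := by rw [div_le_one hp0]; linarith
  have hsq : ‖α‖ ^ 2 = α.re ^ 2 + α.im ^ 2 := by
    rw [Complex.sq_norm, Complex.normSq_apply]; ring
  have himle : |α.im| ≤ ‖α‖ := Complex.abs_im_le_norm α
  have hR : |α.arg| < Real.arccos (|p - 2| / p) ↔
      |p-2| * ‖α‖ < p * α.re := by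
    have ha : Real.arccos (|p-2|/p) ∈ Set.Icc 0 Real.pi :=
      ⟨Real.arccos_nonneg _, Real.arccos_le_pi _⟩
    have hb : |α.arg| ∈ Set.Icc 0 Real.pi := ⟨abs_nonneg _, Complex.abs_arg_le_pi α⟩
    have h1 : |α.arg| < Real.arccos (|p - 2| / p) ↔
        Real.cos (Real.arccos (|p-2|/p)) < Real.cos |α.arg| :=
      (Real.strictAntiOn_cos.lt_iff_gt ha hb).symm
    rw [h1, Real.cos_arccos (le_trans (by norm_num) (div_nonneg hk0 hp0.le)) ht1, Real.cos_abs, Complex.cos_arg hα]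
    rw [div_lt_div_iff₀ hp0 habs]
    constructor <;> intro h <;> nlinarith
  rw [hR]
  have hiff : |p - 2| / (2 * Real.sqrt (p - 1)) * |α.im| < α.re ↔
      |p-2| * |α.im| < 2 * Real.sqrt (p-1) * α.re := by
    rw [div_mul_eq_mul_div, div_lt_iff₀ (by positivity)]
    constructor <;> intro h <;> nlinarith
  rw [hiff]
  constructor
  · intro h
    have hre : 0 < α.re := by nlinarith [mul_nonneg hk0 (abs_nonneg α.im)]
    have h2 : (|p-2| * |α.im|)^2 < (2 * Real.sqrt (p-1) * α.re)^2 :=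
      pow_lt_pow_left₀ h (by positivity) two_ne_zero
    rw [show (2 * Real.sqrt (p-1) * α.re)^2 = 4*(p-1)*α.re^2 by
        rw [mul_pow, mul_pow, hs2]; ring,
      show (|p-2| * |α.im|)^2 = (p-2)^2 * α.im^2 by rw [mul_pow, sq_abs, sq_abs]] at h2
    have hsq2 : (|p-2| * ‖α‖)^2 < (p * α.re)^2 := by
      rw [show (|p-2| * ‖α‖)^2 = (p-2)^2 * (α.re^2 + α.im^2) by
        rw [mul_pow, sq_abs, hsq]]
      nlinarith
    exact (pow_lt_pow_iff_left₀ (by positivity) (by positivity) two_ne_zero).1 hsq2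
  · intro h
    have hre : 0 < α.re := by nlinarith [mul_nonneg hk0 habs.le]
    have h2 : (|p-2| * ‖α‖)^2 < (p * α.re)^2 :=
      pow_lt_pow_left₀ h (by positivity) two_ne_zero
    rw [show (|p-2| * ‖α‖)^2 = (p-2)^2 * (α.re^2 + α.im^2) by
        rw [mul_pow, sq_abs, hsq]] at h2
    have hsq2 : (|p-2| * |α.im|)^2 < (2 * Real.sqrt (p-1) * α.re)^2 := by
      rw [show (2 * Real.sqrt (p-1) * α.re)^2 = 4*(p-1)*α.re^2 by
        rw [mul_pow, mul_pow, hs2]; ring,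
        show (|p-2| * |α.im|)^2 = (p-2)^2 * α.im^2 by rw [mul_pow, sq_abs, sq_abs]]
      nlinarith
    exact (pow_lt_pow_iff_left₀ (by positivity) (by positivity) two_ne_zero).1 hsq2
end
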